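/- (Sufficient ascent of GPM) Let M ∈ ℝ^{d×d} be symmetric, α > 0, and define A_α(X) = αX + M X D where D is a diagonal positive matrix and M is positive semidefinite. For g(X) = tr(Xᵀ M X D), if X^{t+1} ∈ P_St(A_α(X^t)) (the projection of A_α(X^t) onto St(d,K)), then g(X^{t+1}) − g(X^t) ≥ α‖X^{t+1} − X^t‖_F². -/

import Mathlib

open Matrix

/-- Frobenius norm of a real matrix. -/
noncomputable def frobNorm {m n : ℕ} (A : Matrix (Fin m) (Fin n) ℝ) : ℝ :=
  Real.sqrt (∑ i, ∑ j, (A i j) ^ 2)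

lemma quad_nonneg {d K : ℕ} (M : Matrix (Fin d) (Fin d) ℝ) (hM : M.PosSemidef)
    (dv : Fin K → ℝ) (hdv : ∀ k, 0 ≤ dv k) (Z : Matrix (Fin d) (Fin K) ℝ) :
    0 ≤ (Zᵀ * M * Z * Matrix.diagonal dv).trace := by
  have h : (Zᵀ * M * Z * Matrix.diagonal dv).trace
      = ∑ k, (Zᵀ * M * Z) k k * dv k := by
    simp [Matrix.trace, Matrix.diag, Matrix.mul_diagonal]
  rw [h]
  apply Finset.sum_nonneg
  intro k _
  apply mul_nonneg _ (hdv k)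
  have h2 : (Zᵀ * M * Z) k k
      = (fun i => Z i k) ⬝ᵥ (M *ᵥ fun i => Z i k) := by
    simp [Matrix.mul_apply, dotProduct, Matrix.mulVec, Finset.mul_sum,
      Finset.sum_mul]
    rw [Finset.sum_comm]
    exact Finset.sum_congr rfl fun i _ => Finset.sum_congr rfl fun j _ => by ring
  rw [h2]
  simpa using hM.dotProduct_mulVec_nonneg (fun i => Z i k)

lemma tr_swap {d K : ℕ} (M : Matrix (Fin d) (Fin d) ℝ) (hM : Mᵀ = M)
    (dv : Fin K → ℝ) (X Y : Matrix (Fin d) (Fin K) ℝ) :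
    (Xᵀ * M * Y * Matrix.diagonal dv).trace
      = (Yᵀ * M * X * Matrix.diagonal dv).trace := by
  calc (Xᵀ * M * Y * Matrix.diagonal dv).trace
      = ((Xᵀ * M * Y * Matrix.diagonal dv)ᵀ).trace := (Matrix.trace_transpose _).symm
    _ = (Matrix.diagonal dv * (Yᵀ * M * X)).trace := by
        simp [Matrix.transpose_mul, Matrix.diagonal_transpose, hM, Matrix.mul_assoc]
    _ = (Yᵀ * M * X * Matrix.diagonal dv).trace := Matrix.trace_mul_comm _ _

/-- Sufficient ascent of GPM: with `M` symmetric positive semidefinite,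
`D = diag(dv)` with positive diagonal, `α > 0`, and `X^{t+1}` a projection of
`A_α(X^t) = α X^t + M X^t D` onto the Stiefel manifold (i.e. a maximizer of
`Z ↦ tr(Zᵀ A_α(X^t))` over `St(d,K)`), we have
`g(X^{t+1}) − g(X^t) ≥ α ‖X^{t+1} − X^t‖_F²` for `g(X) = tr(Xᵀ M X D)`. -/
theorem gpm_sufficient_ascent {d K : ℕ}
    (M : Matrix (Fin d) (Fin d) ℝ) (hM : M.PosSemidef)
    (dv : Fin K → ℝ) (hdv : ∀ k, 0 < dv k)
    (α : ℝ) (hα : 0 < α)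
    (X Y : Matrix (Fin d) (Fin K) ℝ) (hX : Xᵀ * X = 1) (hY : Yᵀ * Y = 1)
    (hproj : ∀ Z : Matrix (Fin d) (Fin K) ℝ, Zᵀ * Z = 1 →
      (Zᵀ * (α • X + M * X * Matrix.diagonal dv)).trace ≤
        (Yᵀ * (α • X + M * X * Matrix.diagonal dv)).trace) :
    (Yᵀ * M * Y * Matrix.diagonal dv).trace -
        (Xᵀ * M * X * Matrix.diagonal dv).trace ≥
      α * frobNorm (Y - X) ^ 2 := by
  have hc' : (Xᵀ * M * Y * Matrix.diagonal dv).trace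
      = (Yᵀ * M * X * Matrix.diagonal dv).trace := tr_swap M hM.1 dv X Y
  have he' : (Xᵀ * Y).trace = (Yᵀ * X).trace := by
    rw [← Matrix.trace_transpose (Xᵀ * Y), Matrix.transpose_mul,
      Matrix.transpose_transpose]
  have h1 : (Yᵀ * M * Y * Matrix.diagonal dv).trace
      - 2 * (Yᵀ * M * X * Matrix.diagonal dv).trace
      + (Xᵀ * M * X * Matrix.diagonal dv).trace ≥ 0 := by
    have h := quad_nonneg M hM dv (fun k => (hdv k).le) (Y - X)
    have hexp : ((Y - X)ᵀ * M * (Y - X) * Matrix.diagonal dv).trace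
        = (Yᵀ * M * Y * Matrix.diagonal dv).trace
          - 2 * (Yᵀ * M * X * Matrix.diagonal dv).trace
          + (Xᵀ * M * X * Matrix.diagonal dv).trace := by
      rw [Matrix.transpose_sub]
      simp only [Matrix.sub_mul, Matrix.mul_sub, Matrix.trace_sub]
      rw [hc']
      ring
    linarith [hexp ▸ h]
  have h2 : α * (1 : Matrix (Fin K) (Fin K) ℝ).trace
        + (Xᵀ * M * X * Matrix.diagonal dv).trace
      ≤ α * (Yᵀ * X).trace + (Yᵀ * M * X * Matrix.diagonal dv).trace := by
    have h := hproj X hX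
    simp only [Matrix.mul_add, Matrix.trace_add, Matrix.mul_smul, Matrix.trace_smul,
      smul_eq_mul, ← Matrix.mul_assoc] at h
    rw [hX] at h
    linarith
  have h3 : frobNorm (Y - X) ^ 2
      = 2 * (1 : Matrix (Fin K) (Fin K) ℝ).trace - 2 * (Yᵀ * X).trace := by
    have hnn : 0 ≤ ∑ i, ∑ j, ((Y - X) i j) ^ 2 :=
      Finset.sum_nonneg fun i _ => Finset.sum_nonneg fun j _ => sq_nonneg _
    have h4 : frobNorm (Y - X) ^ 2 = ∑ i, ∑ j, ((Y - X) i j) ^ 2 :=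
      Real.sq_sqrt hnn
    have h5 : ((Y - X)ᵀ * (Y - X)).trace = ∑ i, ∑ j, ((Y - X) i j) ^ 2 := by
      rw [Finset.sum_comm]
      simp [Matrix.trace, Matrix.diag, Matrix.mul_apply, sq]
    have h6 : ((Y - X)ᵀ * (Y - X)).trace
        = 2 * (1 : Matrix (Fin K) (Fin K) ℝ).trace - 2 * (Yᵀ * X).trace := by
      rw [Matrix.transpose_sub]
      simp only [Matrix.sub_mul, Matrix.mul_sub, Matrix.trace_sub]
      rw [hX, hY, he']
      ring
    rw [h4, ← h5, h6]
  rw [ge_iff_le, h3]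
  nlinarith [h1, h2]
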